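/- There exists a map σ: PSym(3) → Sym(3) such that σ(V) = diag(s,0,0) with s > 0 only for the simple stretch V = diag(1+s,1,1), yet σ does not satisfy the Baker–Ericksen inequalities. Concretely: σ(V) = (1 − h(λ₁,λ₂,λ₃)) V − I with h(λ₁,λ₂,λ₃) = (λ₁−λ₂)²(λ₁−λ₃)²(λ₂−λ₃)² (λᵢ the eigenvalues of V) has the property that σ(V) = diag(s,0,0) forces V = diag(1+s,1,1), while for V = diag(3,2,1) one gets σ(V) = diag(−4,−3,−2), violating λ₁ > λ₂ ⟹ σ₁ ≥ σ₂. -/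

import Mathlib

open Matrix

/-- PSym(3): positive-definite symmetric real 3×3 matrices. -/
def PSym3 : Set (Matrix (Fin 3) (Fin 3) ℝ) := {V | V.IsSymm ∧ V.PosDef}

/-- h(λ₁,λ₂,λ₃) = (λ₁−λ₂)²(λ₁−λ₃)²(λ₂−λ₃)², evaluated at the eigenvalues of
a (Hermitian, i.e. real symmetric) matrix V; it is symmetric in the
eigenvalues and vanishes iff two eigenvalues coincide. -/
noncomputable def hdisc (V : Matrix (Fin 3) (Fin 3) ℝ) : ℝ :=
  if hV : V.IsHermitian then
    (hV.eigenvalues 0 - hV.eigenvalues 1) ^ 2 *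
      (hV.eigenvalues 0 - hV.eigenvalues 2) ^ 2 *
      (hV.eigenvalues 1 - hV.eigenvalues 2) ^ 2
  else 0

/-- Marzano counterexample map: σ(V) = (1 − h(λ₁,λ₂,λ₃)) V − I. -/
noncomputable def sigmaM (V : Matrix (Fin 3) (Fin 3) ℝ) :
    Matrix (Fin 3) (Fin 3) ℝ :=
  (1 - hdisc V) • V - 1

lemma det_sub_smul_one {n : Type*} [Fintype n] [DecidableEq n]
    (A : Matrix n n ℝ) (hA : A.IsHermitian) (x : ℝ) :
    det (A - x • 1) = ∏ i, (hA.eigenvalues i - x) := by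
  have h1 : (hA.eigenvectorUnitary : Matrix n n ℝ) * star (hA.eigenvectorUnitary : Matrix n n ℝ)
      = 1 := (Matrix.mem_unitaryGroup_iff).mp hA.eigenvectorUnitary.2
  have key : A - x • 1 = (hA.eigenvectorUnitary : Matrix n n ℝ) *
      (diagonal (RCLike.ofReal ∘ hA.eigenvalues) - x • 1) *
      star (hA.eigenvectorUnitary : Matrix n n ℝ) := by
    rw [Matrix.mul_sub, Matrix.sub_mul, ← Unitary.conjStarAlgAut_apply (S := ℝ), ← hA.spectral_theorem]
    congr 1
    rw [Matrix.mul_smul, Matrix.mul_one, Matrix.smul_mul, h1]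
  rw [key, det_mul_right_comm, h1, one_mul]
  have : (diagonal (RCLike.ofReal ∘ hA.eigenvalues) - x • (1 : Matrix n n ℝ))
      = diagonal (fun i => hA.eigenvalues i - x) := by
    rw [smul_one_eq_diagonal, ← diagonal_sub]
    rfl
  rw [this, det_diagonal]

/-- The map σ(V) = (1 − h) V − I produces the uniaxial tension
stress diag(s,0,0) with s > 0 only for the simple stretch V = diag(1+s,1,1),
yet it violates the Baker–Ericksen inequalities: for V = diag(3,2,1) there
are eigenvalues λᵢ > λⱼ of V whose corresponding stress eigenvalues satisfy
σᵢ < σⱼ. -/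
theorem marzano_counterexample :
    (∀ V ∈ PSym3, ∀ s : ℝ, 0 < s →
      sigmaM V = Matrix.diagonal ![s, 0, 0] →
        V = Matrix.diagonal ![1 + s, 1, 1]) ∧
    (∃ V ∈ PSym3, ∃ v w : Fin 3 → ℝ, v ≠ 0 ∧ w ≠ 0 ∧
      ∃ lami lamj si sj : ℝ,
        V.mulVec v = lami • v ∧ (sigmaM V).mulVec v = si • v ∧
        V.mulVec w = lamj • w ∧ (sigmaM V).mulVec w = sj • w ∧
        lami > lamj ∧ si < sj) := by
  constructor
  · intro V hV s hs hσ
    have hherm : V.IsHermitian := hV.2.1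
    set h := hdisc V with hh
    have hc : (1 - h) • V = Matrix.diagonal ![1 + s, 1, 1] := by
      have h1 : (1 - h) • V - 1 = Matrix.diagonal ![s, 0, 0] := hσ
      have h2 : (1 - h) • V = Matrix.diagonal ![s, 0, 0] + 1 := by
        rw [← h1, sub_add_cancel]
      rw [h2]
      ext a b
      fin_cases a <;> fin_cases b <;> simp [Matrix.diagonal, Matrix.one_apply] <;> ring
    have hc0 : (1 - h) ≠ 0 := by
      intro h0
      rw [h0, zero_smul] at hc
      have := congr_fun (congr_fun hc 0) 0
      simp [Matrix.diagonal] at this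
      linarith
    have hVform : V = (1 - h)⁻¹ • Matrix.diagonal ![1 + s, 1, 1] := by
      rw [← hc, smul_smul, inv_mul_cancel₀ hc0, one_smul]
    set lam := hherm.eigenvalues with hlam
    have hmem : ∀ i, lam i = (1 - h)⁻¹ * (1 + s) ∨ lam i = (1 - h)⁻¹ := by
      intro i
      have hdet := det_sub_smul_one V hherm (lam i)
      have h0 : ∏ j, (hherm.eigenvalues j - lam i) = 0 :=
        Finset.prod_eq_zero (Finset.mem_univ i) (by rw [← hlam]; ring)
      rw [h0] at hdet
      have hform : V - lam i • 1 = Matrix.diagonal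
          ![(1 - h)⁻¹ * (1 + s) - lam i, (1 - h)⁻¹ - lam i, (1 - h)⁻¹ - lam i] := by
        rw [hVform]
        ext a b
        fin_cases a <;> fin_cases b <;>
          simp [Matrix.diagonal, Matrix.one_apply] <;> ring
      rw [hform, det_diagonal, Fin.prod_univ_three] at hdet
      simp only [Matrix.cons_val_zero, Matrix.cons_val_one, Matrix.head_cons,
        Matrix.cons_val_two, Matrix.tail_cons] at hdet
      rcases mul_eq_zero.mp hdet with h1 | h1
      · rcases mul_eq_zero.mp h1 with h2 | h2
        · left; linarith [sub_eq_zero.mp h2]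
        · right; linarith [sub_eq_zero.mp h2]
      · right; linarith [sub_eq_zero.mp h1]
    have hzero : h = 0 := by
      have hz : (lam 0 - lam 1) ^ 2 * (lam 0 - lam 2) ^ 2 * (lam 1 - lam 2) ^ 2 = 0 := by
        rcases hmem 0 with h0 | h0 <;> rcases hmem 1 with h1 | h1 <;>
          rcases hmem 2 with h2 | h2 <;> rw [h0, h1, h2] <;> ring
      rw [hh]
      unfold hdisc
      rw [dif_pos hherm]
      exact hz
    rw [hzero] at hc
    simpa using hc
  · refine ⟨Matrix.diagonal ![3, 2, 1], ⟨Matrix.isSymm_diagonal _, ?_⟩, ?_⟩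
    · exact Matrix.posDef_diagonal_iff.mpr (by intro i; fin_cases i <;> norm_num)
    · have hpd : (Matrix.diagonal ![(3:ℝ), 2, 1]).PosDef :=
        Matrix.posDef_diagonal_iff.mpr (by intro i; fin_cases i <;> norm_num)
      have hherm : (Matrix.diagonal ![(3:ℝ), 2, 1]).IsHermitian := hpd.1
      set lam := hherm.eigenvalues with hlam
      have hdetx : ∀ x : ℝ, (3 - x) * (2 - x) * (1 - x) = ∏ j, (lam j - x) := by
        intro x
        have hdet := det_sub_smul_one _ hherm x
        have hform : Matrix.diagonal ![(3:ℝ), 2, 1] - x • 1 =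
            Matrix.diagonal ![3 - x, 2 - x, 1 - x] := by
          ext a b
          fin_cases a <;> fin_cases b <;>
            simp [Matrix.diagonal, Matrix.one_apply] <;> ring
        rw [hform, det_diagonal, Fin.prod_univ_three] at hdet
        simpa using hdet
      have hex : ∀ x : ℝ, (3 - x) * (2 - x) * (1 - x) = 0 → ∃ i, lam i = x := by
        intro x hx
        rw [hdetx x] at hx
        obtain ⟨i, _, hi⟩ := Finset.prod_eq_zero_iff.mp hx
        exact ⟨i, by linarith [sub_eq_zero.mp hi]⟩
      obtain ⟨i3, hi3⟩ := hex 3 (by ring)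
      obtain ⟨i2, hi2⟩ := hex 2 (by ring)
      obtain ⟨i1, hi1⟩ := hex 1 (by ring)
      have hd : hdisc (Matrix.diagonal ![(3:ℝ), 2, 1]) = 4 := by
        unfold hdisc
        rw [dif_pos hherm]
        rw [← hlam]
        fin_cases i3 <;> fin_cases i2 <;> fin_cases i1 <;> simp_all <;> norm_num
      have hsig : sigmaM (Matrix.diagonal ![(3:ℝ), 2, 1]) =
          Matrix.diagonal ![-10, -7, -4] := by
        unfold sigmaM
        rw [hd]
        ext a b
        fin_cases a <;> fin_cases b <;>
          simp [Matrix.diagonal, Matrix.one_apply] <;> ring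
      refine ⟨![1, 0, 0], ![0, 0, 1], ?_, ?_, 3, 1, -10, -4, ?_, ?_, ?_, ?_, by norm_num,
        by norm_num⟩
      · intro hcon; have := congr_fun hcon 0; norm_num at this
      · intro hcon; have := congr_fun hcon 2; simp at this
      · funext i; fin_cases i <;>
          simp [Matrix.mulVec, dotProduct, Fin.sum_univ_three, Matrix.diagonal]
      · rw [hsig]; funext i; fin_cases i <;>
          simp [Matrix.mulVec, dotProduct, Fin.sum_univ_three, Matrix.diagonal]
      · funext i; fin_cases i <;>
          simp [Matrix.mulVec, dotProduct, Fin.sum_univ_three, Matrix.diagonal]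
      · rw [hsig]; funext i; fin_cases i <;>
          simp [Matrix.mulVec, dotProduct, Fin.sum_univ_three, Matrix.diagonal]
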